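/- For every integer r ≥ 3 and integers n₁ ≥ n₂ ≥ ⋯ ≥ n_r ≥ 1, the anti-Ramsey number of the family {C₃, C₄} in the complete r-partite graph K_{n₁,n₂,…,n_r} equals n₁ + n₂ + ⋯ + n_r − 1; that is, the maximum number k such that there exists an edge-coloring of K_{n₁,…,n_r} using exactly k colors containing no rainbow 3-cycle and no rainbow 4-cycle is n₁ + n₂ + ⋯ + n_r − 1. -/

import Mathlib

open Finset

/-- The complete `r`-partite graph with parts of sizes `n 0, n 1, …, n (r-1)`. -/
def Kpartite (r : ℕ) (n : ℕ → ℕ) : SimpleGraph ((i : Fin r) × Fin (n i)) :=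
  SimpleGraph.completeMultipartiteGraph fun i : Fin r => Fin (n i)

/-- The edge-coloring `c` contains a rainbow 3-cycle in `G`. -/
def RainbowC3 {V α : Type*} (G : SimpleGraph V) (c : Sym2 V → α) : Prop :=
  ∃ a b d : V, G.Adj a b ∧ G.Adj b d ∧ G.Adj d a ∧
    c s(a, b) ≠ c s(b, d) ∧ c s(b, d) ≠ c s(d, a) ∧ c s(a, b) ≠ c s(d, a)

/-- The edge-coloring `c` contains a rainbow 4-cycle in `G`. -/
def RainbowC4 {V α : Type*} (G : SimpleGraph V) (c : Sym2 V → α) : Prop :=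
  ∃ a b d e : V, G.Adj a b ∧ G.Adj b d ∧ G.Adj d e ∧ G.Adj e a ∧
    a ≠ d ∧ b ≠ e ∧
    c s(a, b) ≠ c s(b, d) ∧ c s(a, b) ≠ c s(d, e) ∧ c s(a, b) ≠ c s(e, a) ∧
    c s(b, d) ≠ c s(d, e) ∧ c s(b, d) ≠ c s(e, a) ∧ c s(d, e) ≠ c s(e, a)

/-- The coloring `c` uses every one of the `k` colors on at least one edge of `G`
(i.e. it uses exactly `k` colors). -/
def SurjOnEdges {V : Type*} {k : ℕ} (G : SimpleGraph V) (c : Sym2 V → Fin k) : Prop :=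
  ∀ i : Fin k, ∃ e ∈ G.edgeSet, c e = i

section AuxCyc
variable {V α : Type*}

/-- Cycle of length `m` using only edges from `E`, as an `m`-periodic function. -/
def CycOn (E : Finset (Sym2 V)) (m : ℕ) : Prop :=
  ∃ f : ℕ → V, (∀ t, f (t + m) = f t) ∧
    (∀ t u, t < m → u < m → f t = f u → t = u) ∧
    (∀ t, s(f t, f (t + 1)) ∈ E)

/-- Rainbow cycle of length `m`, as an `m`-periodic function. -/
def RbCyc (G : SimpleGraph V) (c : Sym2 V → α) (m : ℕ) : Prop :=
  ∃ f : ℕ → V, (∀ t, f (t + m) = f t) ∧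
    (∀ t u, t < m → u < m → f t = f u → t = u) ∧
    (∀ t, G.Adj (f t) (f (t + 1))) ∧
    (∀ t u, t < m → u < m → t ≠ u → c s(f t, f (t + 1)) ≠ c s(f u, f (u + 1)))

lemma per_mul {f : ℕ → V} {m : ℕ} (hp : ∀ t, f (t + m) = f t) :
    ∀ k t, f (t + k * m) = f t := by
  intro k
  induction k with
  | zero => simp
  | succ k ih => intro t; rw [Nat.succ_mul, ← Nat.add_assoc, hp, ih]

lemma per_mod {f : ℕ → V} {m : ℕ} (hp : ∀ t, f (t + m) = f t) (t : ℕ) :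
    f t = f (t % m) := by
  conv_lhs => rw [← Nat.mod_add_div t m, Nat.mul_comm]
  exact per_mul hp _ _

lemma per_congr {f : ℕ → V} {m : ℕ} (hp : ∀ t, f (t + m) = f t) {t u : ℕ}
    (h : t % m = u % m) : f t = f u := by
  rw [per_mod hp t, per_mod hp u, h]

lemma succ_mod (m a : ℕ) : (a + 1) % m = (a % m + 1) % m := by
  conv_lhs => rw [Nat.add_mod]
  conv_rhs => rw [Nat.add_mod]
  simp [Nat.mod_mod_of_dvd]

lemma rbcyc_split {G : SimpleGraph V} {c : Sym2 V → α} {m j : ℕ}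
    (hj2 : 2 ≤ j) (hjm : j + 2 ≤ m)
    (f : ℕ → V) (hp : ∀ t, f (t + m) = f t)
    (hinj : ∀ t u, t < m → u < m → f t = f u → t = u)
    (hadj : ∀ t, G.Adj (f t) (f (t + 1)))
    (hcol : ∀ t u, t < m → u < m → t ≠ u → c s(f t, f (t + 1)) ≠ c s(f u, f (u + 1)))
    (hch : G.Adj (f 0) (f j)) :
    RbCyc G c (j + 1) ∨ RbCyc G c (m - j + 1) := by
  by_cases hcl : ∀ s, s < j → c s(f 0, f j) ≠ c s(f s, f (s + 1))
  · left
    refine ⟨fun t => f (t % (j + 1)), fun t => by dsimp only; rw [Nat.add_mod_right], ?_, ?_, ?_⟩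
    · intro t u ht hu h
      dsimp only at h
      rw [Nat.mod_eq_of_lt ht, Nat.mod_eq_of_lt hu] at h
      exact hinj t u (by omega) (by omega) h
    · intro t
      dsimp only
      have h1 : (t + 1) % (j + 1) = (t % (j + 1) + 1) % (j + 1) := by
        rw [Nat.add_mod t 1]; congr 1
        rw [Nat.mod_eq_of_lt (show 1 < j + 1 by omega)]
      rw [h1]
      have hslt : t % (j + 1) < j + 1 := Nat.mod_lt _ (by omega)
      rcases Nat.lt_or_ge (t % (j + 1)) j with h | h
      · rw [Nat.mod_eq_of_lt (show t % (j + 1) + 1 < j + 1 by omega)]; exact hadj _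
      · have hsj : t % (j + 1) = j := by omega
        rw [hsj, Nat.mod_self]
        exact hch.symm
    · intro t u ht hu htu
      have et : ∀ w, w < j + 1 →
          s(f (w % (j+1)), f ((w + 1) % (j+1))) =
          (if w = j then s(f 0, f j) else s(f w, f (w + 1))) := by
        intro w hw
        rw [Nat.mod_eq_of_lt hw]
        rcases Nat.lt_or_ge w j with h | h
        · rw [Nat.mod_eq_of_lt (by omega), if_neg (by omega)]
        · have : w = j := by omega
          subst this
          rw [Nat.mod_self, if_pos rfl, Sym2.eq_swap]
      rw [et t ht, et u hu]
      rcases eq_or_ne t j with htj | htj <;> rcases eq_or_ne u j with huj | huj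
      · omega
      · rw [if_pos htj, if_neg huj]
        exact hcl u (by omega)
      · rw [if_neg htj, if_pos huj]
        exact fun h => hcl t (by omega) h.symm
      · rw [if_neg htj, if_neg huj]
        exact hcol t u (by omega) (by omega) htu
  · right
    push_neg at hcl
    obtain ⟨s, hsj, hcs⟩ := hcl
    set L := m - j + 1 with hL
    have hL3 : 3 ≤ L := by omega
    set q : ℕ → V := fun w => if w = 0 then f 0 else f (j + w - 1) with hq
    have hqe : ∀ w, w < L → s(q w, q ((w + 1) % L)) =
        (if w = 0 then s(f 0, f j) else s(f (j + w - 1), f (j + w))) := by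
      intro w hw
      rcases eq_or_ne w 0 with rfl | hw0
      · rw [if_pos rfl]
        simp only [hq]
        rw [Nat.mod_eq_of_lt (by omega)]
        simp only [if_neg (Nat.one_ne_zero), if_pos rfl]
        norm_num
      · rw [if_neg hw0]
        simp only [hq, if_neg hw0]
        rcases Nat.lt_or_ge (w + 1) L with h | h
        · rw [Nat.mod_eq_of_lt h, if_neg (by omega),
            show j + (w + 1) - 1 = j + w by omega]
        · have hwL : w = L - 1 := by omega
          have : (w + 1) % L = 0 := by
            rw [show w + 1 = L by omega, Nat.mod_self]
          rw [this, if_pos rfl]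
          have hfm : f (j + w) = f 0 := by
            rw [show j + w = 0 + m by omega, hp]
          rw [hfm]
    refine ⟨fun t => q (t % L), fun t => by dsimp only; rw [Nat.add_mod_right], ?_, ?_, ?_⟩
    · intro t u ht hu h
      dsimp only at h
      rw [Nat.mod_eq_of_lt ht, Nat.mod_eq_of_lt hu] at h
      simp only [hq] at h
      rcases eq_or_ne t 0 with rfl | ht0 <;> rcases eq_or_ne u 0 with rfl | hu0
      · rfl
      · rw [if_pos rfl, if_neg hu0] at h
        have := hinj 0 (j + u - 1) (by omega) (by omega) h
        omega
      · rw [if_neg ht0, if_pos rfl] at h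
        have := hinj (j + t - 1) 0 (by omega) (by omega) h
        omega
      · rw [if_neg ht0, if_neg hu0] at h
        have := hinj (j + t - 1) (j + u - 1) (by omega) (by omega) h
        omega
    · intro t
      dsimp only
      have hwlt : t % L < L := Nat.mod_lt _ (by omega)
      have h1 : (t + 1) % L = (t % L + 1) % L := by
        rw [Nat.add_mod t 1]; congr 1
        rw [Nat.mod_eq_of_lt (show 1 < L by omega)]
      rw [h1]
      have := hqe (t % L) hwlt
      rcases eq_or_ne (t % L) 0 with hw0 | hw0
      · rw [if_pos hw0] at this
        rw [Sym2.eq_iff] at this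
        rcases this with ⟨h1, h2⟩ | ⟨h1, h2⟩
        · rw [h1, h2]; exact hch
        · rw [h1, h2]; exact hch.symm
      · rw [if_neg hw0] at this
        rw [Sym2.eq_iff] at this
        have hadj' : G.Adj (f (j + t % L - 1)) (f (j + t % L)) := by
          have := hadj (j + t % L - 1)
          rwa [show j + t % L - 1 + 1 = j + t % L by omega] at this
        rcases this with ⟨h1, h2⟩ | ⟨h1, h2⟩
        · rw [h1, h2]; exact hadj'
        · rw [h1, h2]; exact hadj'.symm
    · intro t u ht hu htu
      dsimp only
      have h1 : (t + 1) % L = (t % L + 1) % L := by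
        rw [Nat.add_mod t 1]; congr 1
        rw [Nat.mod_eq_of_lt (show 1 < L by omega)]
      have h2 : (u + 1) % L = (u % L + 1) % L := by
        rw [Nat.add_mod u 1]; congr 1
        rw [Nat.mod_eq_of_lt (show 1 < L by omega)]
      rw [h1, h2, Nat.mod_eq_of_lt ht, Nat.mod_eq_of_lt hu, hqe t ht, hqe u hu]
      have key : ∀ w, 0 < w → w < L →
          c s(f 0, f j) ≠ c s(f (j + w - 1), f (j + w)) := by
        intro w hw0 hwL
        rw [hcs]
        have := hcol s (j + w - 1) (by omega) (by omega) (by omega)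
        rwa [show j + w - 1 + 1 = j + w by omega] at this
      rcases eq_or_ne t 0 with rfl | ht0 <;> rcases eq_or_ne u 0 with rfl | hu0
      · omega
      · rw [if_pos rfl, if_neg hu0]
        exact key u (by omega) hu
      · rw [if_neg ht0, if_pos rfl]
        exact fun h => key t (by omega) ht h.symm
      · rw [if_neg ht0, if_neg hu0]
        have := hcol (j + t - 1) (j + u - 1) (by omega) (by omega) (by omega)
        rwa [show j + t - 1 + 1 = j + t by omega, show j + u - 1 + 1 = j + u by omega] at this
lemma rb_shift {G : SimpleGraph V} {c : Sym2 V → α} {m : ℕ} {f : ℕ → V} (i : ℕ)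
    (hm : 0 < m)
    (hp : ∀ t, f (t + m) = f t)
    (hinj : ∀ t u, t < m → u < m → f t = f u → t = u)
    (hadj : ∀ t, G.Adj (f t) (f (t + 1)))
    (hcol : ∀ t u, t < m → u < m → t ≠ u → c s(f t, f (t + 1)) ≠ c s(f u, f (u + 1))) :
    (∀ t, f (t + m + i) = f (t + i)) ∧
    (∀ t u, t < m → u < m → f (t + i) = f (u + i) → t = u) ∧
    (∀ t, G.Adj (f (t + i)) (f (t + 1 + i))) ∧
    (∀ t u, t < m → u < m → t ≠ u →
      c s(f (t + i), f (t + 1 + i)) ≠ c s(f (u + i), f (u + 1 + i))) := by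
  have cancel : ∀ t u, t < m → u < m → (t + i) % m = (u + i) % m → t = u := by
    intro t u ht hu h
    have h2 : t ≡ u [MOD m] := Nat.ModEq.add_right_cancel' i h
    rwa [Nat.ModEq, Nat.mod_eq_of_lt ht, Nat.mod_eq_of_lt hu] at h2
  refine ⟨?_, ?_, ?_, ?_⟩
  · intro t
    rw [show t + m + i = (t + i) + m by omega, hp]
  · intro t u ht hu h
    rw [per_mod hp (t + i), per_mod hp (u + i)] at h
    exact cancel t u ht hu
      (hinj _ _ (Nat.mod_lt _ hm) (Nat.mod_lt _ hm) h)
  · intro t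
    have := hadj (t + i)
    rwa [show t + i + 1 = t + 1 + i by omega] at this
  · intro t u ht hu htu
    have ha : (t + i) % m < m := Nat.mod_lt _ hm
    have hb : (u + i) % m < m := Nat.mod_lt _ hm
    have hab : (t + i) % m ≠ (u + i) % m := fun h => htu (cancel t u ht hu h)
    have e1 : f (t + i) = f ((t + i) % m) := per_mod hp _
    have e2 : f (t + 1 + i) = f ((t + i) % m + 1) := by
      apply per_congr hp
      rw [show t + 1 + i = (t + i) + 1 by omega]
      exact succ_mod m (t + i)
    have e3 : f (u + i) = f ((u + i) % m) := per_mod hp _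
    have e4 : f (u + 1 + i) = f ((u + i) % m + 1) := by
      apply per_congr hp
      rw [show u + 1 + i = (u + i) + 1 by omega]
      exact succ_mod m (u + i)
    rw [e1, e2, e3, e4]
    exact hcol _ _ ha hb hab

lemma kpartite_adj {r : ℕ} {n : ℕ → ℕ} {x y : (i : Fin r) × Fin (n i)} :
    (Kpartite r n).Adj x y ↔ x.1 ≠ y.1 := by
  simp [Kpartite]

lemma kpartite_no_rbcyc {r : ℕ} {n : ℕ → ℕ} {α : Type*}
    (c : Sym2 ((i : Fin r) × Fin (n i)) → α)
    (h3 : ¬ RainbowC3 (Kpartite r n) c) (h4 : ¬ RainbowC4 (Kpartite r n) c) :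
    ∀ m, 3 ≤ m → ¬ RbCyc (Kpartite r n) c m := by
  intro m
  induction m using Nat.strong_induction_on with
  | _ m ih =>
    rintro hm ⟨f, hp, hinj, hadj, hcol⟩
    rcases show m = 3 ∨ m = 4 ∨ 5 ≤ m by omega with rfl | rfl | hm5
    · have hf3 : f 3 = f 0 := by simpa using hp 0
      refine h3 ⟨f 0, f 1, f 2, hadj 0, hadj 1, ?_, hcol 0 1 (by omega) (by omega) (by omega),
        ?_, ?_⟩
      · have := hadj 2; rwa [show (2:ℕ) + 1 = 3 by rfl, hf3] at this
      · have := hcol 1 2 (by omega) (by omega) (by omega)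
        rwa [show (2:ℕ) + 1 = 3 by rfl, hf3] at this
      · have := hcol 0 2 (by omega) (by omega) (by omega)
        rwa [show (2:ℕ) + 1 = 3 by rfl, hf3] at this
    · have hf4 : f 4 = f 0 := by simpa using hp 0
      refine h4 ⟨f 0, f 1, f 2, f 3, hadj 0, hadj 1, hadj 2, ?_,
        fun h => by have := hinj 0 2 (by omega) (by omega) h; omega,
        fun h => by have := hinj 1 3 (by omega) (by omega) h; omega,
        hcol 0 1 (by omega) (by omega) (by omega),
        hcol 0 2 (by omega) (by omega) (by omega), ?_,
        hcol 1 2 (by omega) (by omega) (by omega), ?_, ?_⟩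
      · have := hadj 3; rwa [show (3:ℕ) + 1 = 4 by rfl, hf4] at this
      · have := hcol 0 3 (by omega) (by omega) (by omega)
        rwa [show (3:ℕ) + 1 = 4 by rfl, hf4] at this
      · have := hcol 1 3 (by omega) (by omega) (by omega)
        rwa [show (3:ℕ) + 1 = 4 by rfl, hf4] at this
      · have := hcol 2 3 (by omega) (by omega) (by omega)
        rwa [show (3:ℕ) + 1 = 4 by rfl, hf4] at this
    · by_cases hpp : ∀ i, i < m → (f i).1 = (f ((i + 2) % m)).1
      · -- chord between f 0 and f 3
        have hp13 : (f 1).1 = (f 3).1 := by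
          have := hpp 1 (by omega)
          rwa [Nat.mod_eq_of_lt (by omega)] at this
        have hp01 : (f 0).1 ≠ (f 1).1 := kpartite_adj.mp (hadj 0)
        have hch : (Kpartite r n).Adj (f 0) (f 3) := by
          rw [kpartite_adj]
          rw [hp13] at hp01
          exact hp01
        rcases rbcyc_split (by omega) (by omega) f hp hinj hadj hcol hch with h | h
        · exact ih 4 (by omega) (by omega) h
        · exact ih (m - 3 + 1) (by omega) (by omega) h
      · push_neg at hpp
        obtain ⟨i, him, hi⟩ := hpp
        obtain ⟨hp', hinj', hadj', hcol'⟩ := rb_shift i (by omega) hp hinj hadj hcol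
        have hch : (Kpartite r n).Adj (f (0 + i)) (f (2 + i)) := by
          rw [kpartite_adj]
          have e1 : f (0 + i) = f i := by rw [Nat.zero_add]
          have e2 : f (2 + i) = f ((i + 2) % m) := by
            rw [show 2 + i = i + 2 by omega]
            exact per_mod hp _
          rw [e1, e2]
          exact hi
        rcases rbcyc_split (by omega) (by omega) (fun t => f (t + i)) hp' hinj' hadj' hcol' hch
          with h | h
        · exact ih 3 (by omega) (by omega) h
        · exact ih (m - 2 + 1) (by omega) (by omega) h


lemma len_le_card [Fintype V] {f : ℕ → V} {L : ℕ}
    (hinj : ∀ t u, t < L → u < L → f t = f u → t = u) : L ≤ Fintype.card V := by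
  classical
  have h := Finset.card_le_card_of_injOn f (fun x _ => Finset.mem_univ (f x))
    (fun a ha b hb h => hinj a b (mem_range.mp ha) (mem_range.mp hb) h)
    (s := Finset.range L) (t := Finset.univ)
  simpa using h

lemma cyc_of_mindeg [Fintype V] {E : Finset (Sym2 V)}
    (hnd : ∀ e ∈ E, ¬ e.IsDiag)
    (hdeg : ∀ v w : V, s(v, w) ∈ E → ∃ u, u ≠ w ∧ s(v, u) ∈ E) :
    ∀ (d L : ℕ) (f : ℕ → V), Fintype.card V + 1 - L = d → 2 ≤ L →
      (∀ t u, t < L → u < L → f t = f u → t = u) →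
      (∀ t, t + 1 < L → s(f t, f (t + 1)) ∈ E) →
      ∃ m, 3 ≤ m ∧ CycOn E m := by
  intro d
  induction d using Nat.strong_induction_on with
  | _ d ih =>
    intro L f hd hL2 hinj hedge
    have hLcard : L ≤ Fintype.card V := len_le_card hinj
    have hlast : s(f (L - 2), f (L - 1)) ∈ E := by
      have := hedge (L - 2) (by omega)
      rwa [show L - 2 + 1 = L - 1 by omega] at this
    obtain ⟨u, huw, huE⟩ := hdeg (f (L - 1)) (f (L - 2)) (by rwa [Sym2.eq_swap])
    have hux : u ≠ f (L - 1) := by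
      intro h
      exact hnd _ huE (by rw [h]; exact Sym2.mk_isDiag_iff.mpr rfl)
    by_cases hj : ∃ j, j < L ∧ f j = u
    · obtain ⟨j, hjL, hfj⟩ := hj
      have hj1 : j ≠ L - 1 := fun h => hux (by rw [← hfj, h])
      have hj2 : j ≠ L - 2 := fun h => huw (by rw [← hfj, h])
      have hjlt : j < L - 2 := by omega
      set M := L - j with hM
      have hM3 : 3 ≤ M := by omega
      refine ⟨M, hM3, fun t => f (j + t % M), fun t => by dsimp only; rw [Nat.add_mod_right],
        ?_, ?_⟩
      · intro t s ht hs h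
        dsimp only at h
        rw [Nat.mod_eq_of_lt ht, Nat.mod_eq_of_lt hs] at h
        have := hinj (j + t) (j + s) (by omega) (by omega) h
        omega
      · intro t
        dsimp only
        have hmlt : t % M < M := Nat.mod_lt _ (by omega)
        rw [succ_mod M t]
        rcases Nat.lt_or_ge (t % M) (M - 1) with h | h
        · rw [Nat.mod_eq_of_lt (show t % M + 1 < M by omega)]
          have := hedge (j + t % M) (by omega)
          rwa [show j + t % M + 1 = j + (t % M + 1) by omega] at this
        · have he : t % M = M - 1 := by omega
          rw [he, show (M - 1 + 1) % M = 0 by rw [show M - 1 + 1 = M by omega, Nat.mod_self]]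
          rw [show j + (M - 1) = L - 1 by omega, Nat.add_zero, hfj]
          exact huE
    · push_neg at hj
      have hne : ∀ t, t < L → f t ≠ u := fun t ht => hj t ht
      refine ih (Fintype.card V + 1 - (L + 1)) (by omega) (L + 1)
        (fun t => if t = L then u else f t) rfl (by omega) ?_ ?_
      · intro t s ht hs h
        rcases eq_or_ne t L with htL | htL <;> rcases eq_or_ne s L with hsL | hsL
        · omega
        · rw [if_pos htL, if_neg hsL] at h
          exact absurd h.symm (hne s (by omega))
        · rw [if_neg htL, if_pos hsL] at h
          exact absurd h (hne t (by omega))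
        · rw [if_neg htL, if_neg hsL] at h
          exact hinj t s (by omega) (by omega) h
      · intro t ht
        rcases eq_or_ne (t + 1) L with h1 | h1
        · rw [if_neg (by omega), if_pos h1, show t = L - 1 by omega]
          exact huE
        · rw [if_neg (by omega), if_neg h1]
          exact hedge t (by omega)
lemma cycon_mono {E E' : Finset (Sym2 V)} (h : E ⊆ E') {m : ℕ} (hc : CycOn E m) :
    CycOn E' m := by
  obtain ⟨f, h1, h2, h3⟩ := hc
  exact ⟨f, h1, h2, fun t => h (h3 t)⟩

lemma cyc_of_many_edges [Fintype V] [DecidableEq V] :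
    ∀ (N : ℕ) (E : Finset (Sym2 V)), E.card = N → (∀ e ∈ E, ¬ e.IsDiag) → E.Nonempty →
      (Finset.univ.filter (fun v => ∃ e ∈ E, v ∈ e)).card ≤ E.card →
      ∃ m, 3 ≤ m ∧ CycOn E m := by
  intro N
  induction N using Nat.strong_induction_on with
  | _ N ih =>
    intro E hEN hnd hne hWE
    by_cases hdeg : ∀ v w : V, s(v, w) ∈ E → ∃ u, u ≠ w ∧ s(v, u) ∈ E
    · obtain ⟨e, he⟩ := hne
      induction e using Sym2.ind with
      | _ a b =>
        have hab : a ≠ b := fun h => hnd _ he (Sym2.mk_isDiag_iff.mpr h)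
        refine cyc_of_mindeg hnd hdeg _ 2 (fun t => if t = 0 then a else b) rfl le_rfl ?_ ?_
        · intro t u ht hu h
          interval_cases t <;> interval_cases u <;> simp_all
        · intro t ht
          have ht0 : t = 0 := by omega
          subst ht0
          simpa using he
    · push_neg at hdeg
      obtain ⟨v, w, hvwE, hvw⟩ := hdeg
      have hvwne : v ≠ w := fun h => hnd _ hvwE (Sym2.mk_isDiag_iff.mpr h)
      set E' := E.erase s(v, w) with hE'
      have hvE' : ∀ e ∈ E', v ∉ e := by
        intro e he' hv
        obtain ⟨u, rfl⟩ := Sym2.mem_iff_exists.mp hv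
        have heE : s(v, u) ∈ E := mem_of_mem_erase he'
        have hu : u = w := by
          by_contra h
          exact hvw u h heE
        subst hu
        exact (ne_of_mem_erase he') rfl
      have hE'ne : E'.Nonempty := by
        rcases E'.eq_empty_or_nonempty with h | h
        · exfalso
          have hEsub : E ⊆ {s(v, w)} := by
            intro e heE
            rcases eq_or_ne e s(v, w) with rfl | hne'
            · exact mem_singleton_self _
            · exfalso
              have hmem : e ∈ E' := mem_erase.mpr ⟨hne', heE⟩
              rw [h] at hmem
              exact notMem_empty e hmem
          have h2 : ({v, w} : Finset V) ⊆ Finset.univ.filter (fun x => ∃ e ∈ E, x ∈ e) := by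
            intro x hx
            simp only [mem_insert, mem_singleton] at hx
            rcases hx with h | h
            · exact mem_filter.mpr ⟨mem_univ _, s(v, w), hvwE, by rw [h]; exact Sym2.mem_mk_left _ _⟩
            · exact mem_filter.mpr ⟨mem_univ _, s(v, w), hvwE, by rw [h]; exact Sym2.mem_mk_right _ _⟩
          have h3 : 2 ≤ (Finset.univ.filter (fun x => ∃ e ∈ E, x ∈ e)).card := by
            calc 2 = ({v, w} : Finset V).card := (card_pair hvwne).symm
            _ ≤ _ := card_le_card h2
          have h4 : E.card ≤ 1 := (card_le_card hEsub).trans (card_singleton _).le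
          omega
        · exact h
      have hcard' : E'.card = E.card - 1 := card_erase_of_mem hvwE
      have hWsub : Finset.univ.filter (fun x => ∃ e ∈ E', x ∈ e) ⊆
          (Finset.univ.filter (fun x => ∃ e ∈ E, x ∈ e)).erase v := by
        intro x hx
        obtain ⟨-, e, he', hxe⟩ := mem_filter.mp hx
        refine mem_erase.mpr ⟨fun h => hvE' e he' (h ▸ hxe),
          mem_filter.mpr ⟨mem_univ _, e, mem_of_mem_erase he', hxe⟩⟩
      have hvW : v ∈ Finset.univ.filter (fun x => ∃ e ∈ E, x ∈ e) :=
        mem_filter.mpr ⟨mem_univ _, s(v, w), hvwE, Sym2.mem_mk_left _ _⟩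
      have hWE' : (Finset.univ.filter (fun x => ∃ e ∈ E', x ∈ e)).card ≤ E'.card := by
        calc (Finset.univ.filter (fun x => ∃ e ∈ E', x ∈ e)).card
            ≤ ((Finset.univ.filter (fun x => ∃ e ∈ E, x ∈ e)).erase v).card :=
              card_le_card hWsub
          _ = (Finset.univ.filter (fun x => ∃ e ∈ E, x ∈ e)).card - 1 :=
              card_erase_of_mem hvW
          _ ≤ E.card - 1 := Nat.sub_le_sub_right hWE 1
          _ = E'.card := hcard'.symm
      have hpos : 0 < E.card := card_pos.mpr hne
      obtain ⟨m, hm3, hcyc⟩ := ih E'.card (by omega) E' rfl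
        (fun e he => hnd e (mem_of_mem_erase he)) hE'ne hWE'
      exact ⟨m, hm3, cycon_mono (erase_subset _ _) hcyc⟩
lemma rbcyc_of_cycon {G : SimpleGraph V} {c : Sym2 V → α} {E : Finset (Sym2 V)}
    (hEG : ∀ e ∈ E, e ∈ G.edgeSet)
    (hcinj : ∀ e₁ ∈ E, ∀ e₂ ∈ E, c e₁ = c e₂ → e₁ = e₂)
    {m : ℕ} (hm : 3 ≤ m) (h : CycOn E m) : RbCyc G c m := by
  obtain ⟨f, hp, hinj, hedge⟩ := h
  refine ⟨f, hp, hinj, fun t => (G.mem_edgeSet).mp (hEG _ (hedge t)), ?_⟩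
  intro t u ht hu htu hcc
  have heq := hcinj _ (hedge t) _ (hedge u) hcc
  rw [Sym2.eq_iff] at heq
  rcases heq with ⟨h1, h2⟩ | ⟨h1, h2⟩
  · exact htu (hinj t u ht hu h1)
  · have e1 : f (u + 1) = f ((u + 1) % m) := per_mod hp _
    have e2 : f (t + 1) = f ((t + 1) % m) := per_mod hp _
    have a1 : t = (u + 1) % m :=
      hinj _ _ ht (Nat.mod_lt _ (by omega)) (by rw [← e1]; exact h1)
    have a2 : (t + 1) % m = u :=
      hinj _ _ (Nat.mod_lt _ (by omega)) hu (by rw [← e2]; exact h2)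
    rcases Nat.lt_or_ge (u + 1) m with h' | h'
    · rw [Nat.mod_eq_of_lt h'] at a1
      rcases Nat.lt_or_ge (t + 1) m with h'' | h''
      · rw [Nat.mod_eq_of_lt h''] at a2; omega
      · have ht1 : t + 1 = m := by omega
        rw [ht1, Nat.mod_self] at a2
        omega
    · have hu1 : u + 1 = m := by omega
      rw [hu1, Nat.mod_self] at a1
      rw [a1] at a2
      rw [Nat.mod_eq_of_lt (by omega)] at a2
      omega

end AuxCyc

set_option maxHeartbeats 2000000 in
private theorem antiRamsey_mem_part (r : ℕ) (n : ℕ → ℕ) (hr : 3 ≤ r)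
    (hpos : ∀ i : ℕ, i < r → 1 ≤ n i)
    :
    ((∑ i ∈ Finset.range r, n i) - 1) ∈ {k : ℕ |
      ∃ c : Sym2 ((i : Fin r) × Fin (n i)) → Fin k,
        SurjOnEdges (Kpartite r n) c ∧
        ¬ RainbowC3 (Kpartite r n) c ∧ ¬ RainbowC4 (Kpartite r n) c} := by
  classical
  set N := ∑ i ∈ Finset.range r, n i with hN
  have hN3 : 3 ≤ N := by
    calc 3 ≤ r := hr
    _ = ∑ _i ∈ Finset.range r, 1 := by simp
    _ ≤ N := Finset.sum_le_sum fun i hi => hpos i (mem_range.mp hi)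
  have hcard : Fintype.card ((i : Fin r) × Fin (n i)) = N := by
    rw [hN, Fintype.card_sigma]
    simp [Fin.sum_univ_eq_sum_range (fun i => n i) r]
  set v0 : (i : Fin r) × Fin (n i) := ⟨⟨0, by omega⟩, ⟨0, hpos 0 (by omega)⟩⟩ with hv0
  set v1 : (i : Fin r) × Fin (n i) := ⟨⟨1, by omega⟩, ⟨0, hpos 1 (by omega)⟩⟩ with hv1
  have hv01fst : v0.1 ≠ v1.1 := by
    rw [hv0, hv1]
    intro h
    simpa using congrArg Fin.val h
  have hv01 : v0 ≠ v1 := fun h => hv01fst (congrArg Sigma.fst h)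
  set e0 : ((i : Fin r) × Fin (n i)) ≃ Fin N := Fintype.equivFinOfCardEq hcard with he0
  set e1 : ((i : Fin r) × Fin (n i)) ≃ Fin N := e0.trans (Equiv.swap (e0 v0) ⟨0, by omega⟩) with he1
  set f : ((i : Fin r) × Fin (n i)) ≃ Fin N := e1.trans (Equiv.swap (e1 v1) ⟨1, by omega⟩) with hf
  have he1v0 : e1 v0 = ⟨0, by omega⟩ := by
    rw [he1]
    simp [Equiv.swap_apply_left]
  have hfv1 : f v1 = ⟨1, by omega⟩ := by
    rw [hf]
    simp [Equiv.swap_apply_left]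
  have hfv0 : f v0 = ⟨0, by omega⟩ := by
    rw [hf]
    simp only [Equiv.trans_apply, he1v0]
    apply Equiv.swap_apply_of_ne_of_ne
    · intro h
      exact hv01 (e1.injective (he1v0.trans h))
    · intro h
      simpa using congrArg Fin.val h
  set F : ((i : Fin r) × Fin (n i)) → ℕ := fun v => (f v : ℕ) with hF
  have Finj : Function.Injective F := fun a b h => f.injective (Fin.ext h)
  have FN : ∀ v, F v < N := fun v => (f v).isLt
  set c : Sym2 ((i : Fin r) × Fin (n i)) → Fin (N - 1) :=
    Sym2.lift ⟨fun a b => ⟨max (F a) (F b) - 1, by have := FN a; have := FN b; omega⟩,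
      fun a b => by simp only [Fin.mk.injEq]; omega⟩ with hc
  have cval : ∀ x y : (i : Fin r) × Fin (n i), (c s(x, y)).val = max (F x) (F y) - 1 := by
    intro x y
    rw [hc]
    simp
  have hFv0 : F v0 = 0 := by rw [hF]; simp only [hfv0]
  have hFv1 : F v1 = 1 := by rw [hF]; simp only [hfv1]
  have hFsurj : ∀ m, m < N → ∃ v, F v = m := by
    intro m hm
    exact ⟨f.symm ⟨m, hm⟩, by rw [hF]; simp⟩
  clear hc
  clear_value F c v0 v1
  clear hF hf he1 he0 f e1 e0 hfv0 hfv1 he1v0 hv0 hv1 hv01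
  refine ⟨c, ?_, ?_, ?_⟩
  · -- surjectivity
    intro i
    have hi : (i : ℕ) < N - 1 := i.isLt
    obtain ⟨vv, hFvv⟩ := hFsurj (i.val + 1) (by omega)
    by_cases hpart : vv.1 = v0.1
    · have hvvne1 : vv ≠ v1 := fun h => hv01fst (hpart.symm.trans (congrArg Sigma.fst h))
      have hge : 1 ≤ i.val := by
        rcases Nat.eq_zero_or_pos i.val with h0 | h0
        · exact absurd (Finj (by rw [hFvv, hFv1, h0])) hvvne1
        · exact h0
      refine ⟨s(v1, vv), ?_, ?_⟩
      · rw [SimpleGraph.mem_edgeSet, kpartite_adj]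
        rw [hpart]
        exact fun h => hv01fst h.symm
      · apply Fin.ext
        rw [cval]
        rw [hFv1, hFvv]
        omega
    · refine ⟨s(v0, vv), ?_, ?_⟩
      · rw [SimpleGraph.mem_edgeSet, kpartite_adj]
        exact fun h => hpart h.symm
      · apply Fin.ext
        rw [cval]
        rw [hFv0, hFvv]
        omega
  · -- no rainbow C3
    rintro ⟨a, b, d, hab, hbd, hda, h1, h2, h3⟩
    have nab : F a ≠ F b := fun h => hab.ne (Finj h)
    have nbd : F b ≠ F d := fun h => hbd.ne (Finj h)
    have nda : F d ≠ F a := fun h => hda.ne (Finj h)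
    rcases show (F b < F a ∧ F d < F a) ∨ (F a < F b ∧ F d < F b) ∨ (F a < F d ∧ F b < F d)
      by omega with ⟨ha1, ha2⟩ | ⟨ha1, ha2⟩ | ⟨ha1, ha2⟩
    · exact h3 (Fin.ext (by rw [cval, cval]; omega))
    · exact h1 (Fin.ext (by rw [cval, cval]; omega))
    · exact h2 (Fin.ext (by rw [cval, cval]; omega))
  · -- no rainbow C4
    rintro ⟨a, b, d, e, hab, hbd, hde, hea, had, hbe, h1, h2, h3, h4, h5, h6⟩
    have nab : F a ≠ F b := fun h => hab.ne (Finj h)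
    have nbd : F b ≠ F d := fun h => hbd.ne (Finj h)
    have nde : F d ≠ F e := fun h => hde.ne (Finj h)
    have nea : F e ≠ F a := fun h => hea.ne (Finj h)
    have nad : F a ≠ F d := fun h => had (Finj h)
    have nbe : F b ≠ F e := fun h => hbe (Finj h)
    rcases show (F b < F a ∧ F d < F a ∧ F e < F a) ∨ (F a < F b ∧ F d < F b ∧ F e < F b)
        ∨ (F a < F d ∧ F b < F d ∧ F e < F d) ∨ (F a < F e ∧ F b < F e ∧ F d < F e)
      by omega with ⟨ha1, ha2, ha3⟩ | ⟨ha1, ha2, ha3⟩ | ⟨ha1, ha2, ha3⟩ | ⟨ha1, ha2, ha3⟩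
    · exact h3 (Fin.ext (by rw [cval, cval]; omega))
    · exact h1 (Fin.ext (by rw [cval, cval]; omega))
    · exact h4 (Fin.ext (by rw [cval, cval]; omega))
    · exact h6 (Fin.ext (by rw [cval, cval]; omega))

/-- The anti-Ramsey number of `{C₃, C₄}` in the complete `r`-partite graph
`K_{n₁,…,n_r}` equals `n₁ + ⋯ + n_r − 1`. -/
theorem antiRamsey_C3C4_complete_multipartite (r : ℕ) (n : ℕ → ℕ) (hr : 3 ≤ r)
    (hmono : ∀ i j : ℕ, i ≤ j → j < r → n j ≤ n i)
    (hpos : ∀ i : ℕ, i < r → 1 ≤ n i) :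
    IsGreatest {k : ℕ |
      ∃ c : Sym2 ((i : Fin r) × Fin (n i)) → Fin k,
        SurjOnEdges (Kpartite r n) c ∧
        ¬ RainbowC3 (Kpartite r n) c ∧ ¬ RainbowC4 (Kpartite r n) c}
      ((∑ i ∈ Finset.range r, n i) - 1) := by
  classical
  constructor
  · exact antiRamsey_mem_part r n hr hpos
  · rintro k ⟨c, hsurj, h3, h4⟩
    set N := ∑ i ∈ Finset.range r, n i with hN
    have hN3 : 3 ≤ N := by
      calc 3 ≤ r := hr
      _ = ∑ _i ∈ Finset.range r, 1 := by simp
      _ ≤ N := Finset.sum_le_sum fun i hi => hpos i (mem_range.mp hi)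
    have hcard : Fintype.card ((i : Fin r) × Fin (n i)) = N := by
      rw [hN, Fintype.card_sigma]
      simp [Fin.sum_univ_eq_sum_range (fun i => n i) r]
    by_contra hle
    push_neg at hle
    have hkN : N ≤ k := by omega
    choose g hg1 hg2 using hsurj
    have hginj : Function.Injective g := fun i j h => by rw [← hg2 i, ← hg2 j, h]
    set E : Finset (Sym2 ((i : Fin r) × Fin (n i))) := Finset.image g Finset.univ with hE
    have hEG : ∀ e ∈ E, e ∈ (Kpartite r n).edgeSet := by
      intro e he
      obtain ⟨i, -, rfl⟩ := Finset.mem_image.mp he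
      exact hg1 i
    have hEcard : E.card = k := by
      rw [hE, Finset.card_image_of_injective _ hginj, card_univ, Fintype.card_fin]
    have hnd : ∀ e ∈ E, ¬ e.IsDiag :=
      fun e he => (Kpartite r n).not_isDiag_of_mem_edgeSet (hEG e he)
    have hEne : E.Nonempty :=
      ⟨g ⟨0, by omega⟩, Finset.mem_image_of_mem g (Finset.mem_univ _)⟩
    have hW : (Finset.univ.filter
        (fun v => ∃ e ∈ E, v ∈ e)).card ≤ E.card := by
      calc (Finset.univ.filter (fun v => ∃ e ∈ E, v ∈ e)).card
          ≤ (Finset.univ : Finset ((i : Fin r) × Fin (n i))).card :=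
            card_le_card (filter_subset _ _)
        _ = N := by rw [card_univ, hcard]
        _ ≤ k := hkN
        _ = E.card := hEcard.symm
    obtain ⟨m, hm3, hcyc⟩ := cyc_of_many_edges E.card E rfl hnd hEne hW
    have hcinj : ∀ e₁ ∈ E, ∀ e₂ ∈ E, c e₁ = c e₂ → e₁ = e₂ := by
      intro e₁ he₁ e₂ he₂ hcc
      obtain ⟨i, -, rfl⟩ := Finset.mem_image.mp he₁
      obtain ⟨j, -, rfl⟩ := Finset.mem_image.mp he₂
      rw [congrArg g (show i = j by rw [← hg2 i, ← hg2 j, hcc])]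
    exact kpartite_no_rbcyc c h3 h4 m hm3 (rbcyc_of_cycon hEG hcinj hm3 hcyc)
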